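/- In the three-node cycle with positive susceptances, the sign of ∂p_12/∂β_12 equals the sign of p_12: decreasing the susceptance of an overloaded line always decreases the magnitude of the flow on that line. -/

import Mathlib

/-- Flow on line (1,2) of the three-node cycle as a function of its own
susceptance `b = β₁₂`, with fixed `β₁₃, β₂₃, p₁, p₂`. -/
noncomputable def flow12own (β13 β23 p1 p2 : ℝ) (b : ℝ) : ℝ :=
  b * (p1 * β23 - p2 * β13) / (b * β13 + b * β23 + β13 * β23)

lemma flow12own_hasDerivAt (β13 β23 p1 p2 b : ℝ) (h13 : 0 < β13) (h23 : 0 < β23)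
    (hb : 0 < b) :
    HasDerivAt (flow12own β13 β23 p1 p2)
      ((p1 * β23 - p2 * β13) * (β13 * β23) / (b * β13 + b * β23 + β13 * β23) ^ 2) b := by
  have hd : 0 < b * β13 + b * β23 + β13 * β23 := by positivity
  have h1 : HasDerivAt (fun x : ℝ => x * (p1 * β23 - p2 * β13)) (p1 * β23 - p2 * β13) b := by
    simpa using (hasDerivAt_id b).mul_const (p1 * β23 - p2 * β13)
  have h2 : HasDerivAt (fun x : ℝ => x * β13 + x * β23 + β13 * β23) (β13 + β23) b := by
    simpa using (((hasDerivAt_id b).mul_const β13).add ((hasDerivAt_id b).mul_const β23)).add_const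
      (β13 * β23)
  have := h1.div h2 hd.ne'
  refine this.congr_deriv ?_
  ring

/-- The sign of `∂p₁₂/∂β₁₂` equals the sign of `p₁₂`:
`∂p₁₂/∂β₁₂ · p₁₂ ≥ 0`, with strict inequality when `p₁₂ ≠ 0`. -/
theorem three_node_own_sensitivity_sign
    (β12 β13 β23 p1 p2 : ℝ)
    (h12 : 0 < β12) (h13 : 0 < β13) (h23 : 0 < β23) :
    0 ≤ deriv (flow12own β13 β23 p1 p2) β12 * flow12own β13 β23 p1 p2 β12 ∧
      (flow12own β13 β23 p1 p2 β12 ≠ 0 →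
        0 < deriv (flow12own β13 β23 p1 p2) β12 * flow12own β13 β23 p1 p2 β12) := by
  have hd : 0 < β12 * β13 + β12 * β23 + β13 * β23 := by positivity
  have hder := (flow12own_hasDerivAt β13 β23 p1 p2 β12 h13 h23 h12).deriv
  set K := p1 * β23 - p2 * β13 with hK
  have hval : flow12own β13 β23 p1 p2 β12 = β12 * K / (β12 * β13 + β12 * β23 + β13 * β23) := rfl
  have hprod : deriv (flow12own β13 β23 p1 p2) β12 * flow12own β13 β23 p1 p2 β12 =
      K ^ 2 * (β13 * β23) * β12 / (β12 * β13 + β12 * β23 + β13 * β23) ^ 3 := by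
    rw [hder, hval]; field_simp
  constructor
  · rw [hprod]; positivity
  · intro hne
    have hKne : K ≠ 0 := by
      intro h; apply hne; rw [hval, h]; simp
    rw [hprod]
    have : 0 < K ^ 2 := by positivity
    positivity
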